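/- arXiv:1806.02456 — 2 statements merged into one kernel-verified Lean document; each statement's English description precedes it below -/
import Mathlib

section
/- Let u be a minimizer of the energy E, let U ⊆ I be an open interval on which f has bounded variation (eVariationOn f U < ∞), and let x ∈ U. Suppose f has one-sided limits L⁻ = lim_{y→x⁻} f(y) and L⁺ = lim_{y→x⁺} f(y). Then u has one-sided limits M⁻ = lim_{y→x⁻} u(y) and M⁺ = lim_{y→x⁺} u(y) at x, and the jump of u at x is bounded by that of f: ‖M⁺ − M⁻‖ ≤ ‖L⁺ − L⁻‖. -/
open MeasureTheory Set Filter
open scoped ENNReal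

noncomputable section

/-- Square-integrability of `w` on the set `S`. -/
def SqIntOn {n : ℕ} (w : ℝ → EuclideanSpace ℝ (Fin n)) (S : Set ℝ) : Prop :=
  MeasureTheory.IntegrableOn (fun x => ‖w x‖ ^ 2) S

/-- The Rudin–Osher–Fatemi energy with fidelity weight `1/(2 lam)`, datum `f`,
on the interval `I = Ioo a b`. -/
def rofEnergy {n : ℕ} (lam a b : ℝ) (f w : ℝ → EuclideanSpace ℝ (Fin n)) : ℝ≥0∞ :=
  eVariationOn w (Set.Ioo a b) +
    ENNReal.ofReal ((1 / (2 * lam)) * ∫ x in Set.Ioo a b, ‖w x - f x‖ ^ 2)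

/-- `u` is a minimizer of the ROF energy among Borel measurable functions
square-integrable on `Ioo a b`. -/
def IsMinimizer {n : ℕ} (lam a b : ℝ) (f u : ℝ → EuclideanSpace ℝ (Fin n)) : Prop :=
  Measurable u ∧ SqIntOn u (Set.Ioo a b) ∧
    ∀ w : ℝ → EuclideanSpace ℝ (Fin n), Measurable w → SqIntOn w (Set.Ioo a b) →
      rofEnergy lam a b f u ≤ rofEnergy lam a b f w


/-! ### Helper lemmas on `eVariationOn` -/

section EVarHelpers

variable {E : Type*} [NormedAddCommGroup E]

lemma evar_sub_const (v : ℝ → E) (s : Set ℝ) (c : E) :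
    eVariationOn (fun y => v y - c) s = eVariationOn v s := by
  simp only [eVariationOn, edist_sub_right]

lemma evar_neg_comp (v : ℝ → E) (s : Set ℝ) :
    eVariationOn (fun y => v (-y)) s = eVariationOn v (Neg.neg '' s) :=
  eVariationOn.comp_eq_of_antitoneOn v Neg.neg (fun _ _ _ _ h => neg_le_neg h)

lemma evar_small_left (v : ℝ → E) {a x : ℝ} (hax : a < x)
    (h : eVariationOn v (Ioo a x) ≠ ⊤) {ε : ℝ≥0∞} (hε : 0 < ε) :
    ∃ z ∈ Ioo a x, eVariationOn v (Ioo z x) < ε := by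
  set S := eVariationOn v (Ioo a x) with hSdef
  by_cases hS : S < ε
  · refine ⟨(a + x) / 2, ⟨by linarith, by linarith⟩, lt_of_le_of_lt ?_ hS⟩
    exact eVariationOn.mono v (fun y hy => ⟨by linarith [hy.1], hy.2⟩)
  push_neg at hS
  have hεtop : ε ≠ ⊤ := fun hh => h (top_le_iff.mp (hh ▸ hS))
  have hSlt : S - ε < S := ENNReal.sub_lt_self h (fun h0 => (hε.trans_le hS).ne' h0) hε.ne'
  rw [hSdef, eVariationOn, lt_iSup_iff] at hSlt
  obtain ⟨⟨n, u, hu, hus⟩, hsum⟩ := hSlt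
  set z := u n with hz
  have hzmem : z ∈ Ioo a x := hus n
  have hA : S - ε < eVariationOn v (Ioc a z) := by
    refine hsum.trans_le ?_
    have hmono : Monotone (fun i => u (min i n)) :=
      fun i j hij => hu (min_le_min_right n hij)
    have hmem : ∀ i, u (min i n) ∈ Ioc a z :=
      fun i => ⟨(hus _).1, hu (min_le_right i n)⟩
    have := eVariationOn.sum_le (f := v) (n := n) hmono hmem
    refine le_trans (le_of_eq ?_) this
    apply Finset.sum_congr rfl
    intro i hi
    have hi' : i < n := Finset.mem_range.mp hi
    rw [min_eq_left hi'.le, min_eq_left hi']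
  have hunion : eVariationOn v (Ioc a z) + eVariationOn v (Ico z x) = S := by
    rw [hSdef, ← eVariationOn.union v (isGreatest_Ioc hzmem.1) (isLeast_Ico hzmem.2)]
    congr 1
    rw [Ioc_union_Ico_eq_Ioo hzmem.1 hzmem.2]
  refine ⟨z, hzmem, ?_⟩
  have hB : eVariationOn v (Ioo z x) ≤ eVariationOn v (Ico z x) :=
    eVariationOn.mono v Ioo_subset_Ico_self
  refine lt_of_le_of_lt hB ?_
  by_contra hc
  push_neg at hc
  have : S < S := by
    calc S = eVariationOn v (Ioc a z) + eVariationOn v (Ico z x) := hunion.symm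
    _ ≥ eVariationOn v (Ioc a z) + ε := by gcongr
    _ > (S - ε) + ε := by exact ENNReal.add_lt_add_right hεtop hA
    _ = S := tsub_add_cancel_of_le hS
  exact absurd this (lt_irrefl _)

lemma evar_small_right (v : ℝ → E) {x b : ℝ} (hxb : x < b)
    (h : eVariationOn v (Ioo x b) ≠ ⊤) {ε : ℝ≥0∞} (hε : 0 < ε) :
    ∃ z ∈ Ioo x b, eVariationOn v (Ioo x z) < ε := by
  have hneg : eVariationOn (fun y => v (-y)) (Ioo (-b) (-x)) = eVariationOn v (Ioo x b) := by
    rw [evar_neg_comp]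
    congr 1
    rw [Set.image_neg_Ioo]; simp
  obtain ⟨z, hz, hzvar⟩ := evar_small_left (fun y => v (-y)) (neg_lt_neg hxb)
    (by rw [hneg]; exact h) hε
  refine ⟨-z, ⟨by linarith [hz.2], by linarith [hz.1]⟩, ?_⟩
  have : eVariationOn (fun y => v (-y)) (Ioo z (-x)) = eVariationOn v (Ioo x (-z)) := by
    rw [evar_neg_comp]
    congr 1
    rw [Set.image_neg_Ioo]; simp
  rwa [this] at hzvar

lemma exists_left_lim [CompleteSpace E] (v : ℝ → E) {a x : ℝ} (hax : a < x)
    (h : eVariationOn v (Ioo a x) ≠ ⊤) :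
    ∃ L, Tendsto v (nhdsWithin x (Iio x)) (nhds L) := by
  have hc : Cauchy (Filter.map v (nhdsWithin x (Iio x))) := by
    rw [EMetric.cauchy_iff]
    constructor
    · exact Filter.map_neBot.ne'
    · intro ε hε
      obtain ⟨z, hz, hzvar⟩ := evar_small_left v hax h hε
      refine ⟨v '' Ioo z x, Filter.image_mem_map (Ioo_mem_nhdsLT_of_mem ⟨hz.2, le_rfl⟩), ?_⟩
      rintro p ⟨y1, hy1, rfl⟩ q ⟨y2, hy2, rfl⟩
      exact lt_of_le_of_lt (eVariationOn.edist_le v hy1 hy2) hzvar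
  obtain ⟨L, hL⟩ := CompleteSpace.complete hc
  exact ⟨L, hL⟩

lemma exists_right_lim [CompleteSpace E] (v : ℝ → E) {x b : ℝ} (hxb : x < b)
    (h : eVariationOn v (Ioo x b) ≠ ⊤) :
    ∃ L, Tendsto v (nhdsWithin x (Ioi x)) (nhds L) := by
  have hc : Cauchy (Filter.map v (nhdsWithin x (Ioi x))) := by
    rw [EMetric.cauchy_iff]
    constructor
    · exact Filter.map_neBot.ne'
    · intro ε hε
      obtain ⟨z, hz, hzvar⟩ := evar_small_right v hxb h hε
      refine ⟨v '' Ioo x z, Filter.image_mem_map (Ioo_mem_nhdsGT_of_mem ⟨le_rfl, hz.1⟩), ?_⟩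
      rintro p ⟨y1, hy1, rfl⟩ q ⟨y2, hy2, rfl⟩
      exact lt_of_le_of_lt (eVariationOn.edist_le v hy1 hy2) hzvar
  obtain ⟨L, hL⟩ := CompleteSpace.complete hc
  exact ⟨L, hL⟩

lemma evar_union_point_right (v : ℝ → E) {s : Set ℝ} {m : ℝ} (hs : s ⊆ Iio m)
    (hne : ∀ z, z < m → (s ∩ Ioo z m).Nonempty) {L : E}
    (hL : Tendsto v (nhdsWithin m s) (nhds L)) :
    eVariationOn v (s ∪ {m}) = eVariationOn v s + edist L (v m) := by
  classical
  have hsne : s.Nonempty := ((hne (m - 1) (by linarith)).imp (fun z hz => hz.1))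
  have hNB : (nhdsWithin m s).NeBot := by
    rw [← mem_closure_iff_nhdsWithin_neBot, Metric.mem_closure_iff]
    intro ε hε
    obtain ⟨z, hzs, hz⟩ := hne (m - ε) (by linarith)
    refine ⟨z, hzs, ?_⟩
    rw [Real.dist_eq, abs_sub_lt_iff]
    constructor <;> linarith [hz.1, hz.2]
  have hfind : ∀ (η : ℝ≥0∞), 0 < η → ∀ z0 : ℝ, z0 < m →
      ∃ z ∈ s, z0 < z ∧ edist (v z) L < η := by
    intro η hη z0 hz0
    have h1 : v ⁻¹' (EMetric.ball L η) ∈ nhdsWithin m s := hL (EMetric.ball_mem_nhds L hη)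
    have h2 : Ioi z0 ∈ nhdsWithin m s := nhdsWithin_le_nhds (Ioi_mem_nhds hz0)
    obtain ⟨z, hz⟩ := Filter.nonempty_of_mem
      (Filter.inter_mem (Filter.inter_mem h1 h2) self_mem_nhdsWithin)
    exact ⟨z, hz.2, hz.1.2, hz.1.1⟩
  apply le_antisymm
  · -- ≤ direction
    apply ENNReal.le_of_forall_pos_le_add
    intro η hη _
    have hη' : (0:ℝ≥0∞) < η := ENNReal.coe_pos.mpr hη
    rw [eVariationOn]
    apply iSup_le
    rintro ⟨n, u, hu, hus⟩
    dsimp only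
    have hle : ∀ i, u i ≤ m := by
      intro i
      rcases hus i with h | h
      · exact (hs h).le
      · exact le_of_eq h
    by_cases hn : u n = m
    · have hex : ∃ j, u j = m := ⟨n, hn⟩
      set j := Nat.find hex with hjdef
      have hj : u j = m := Nat.find_spec hex
      have hjle : j ≤ n := Nat.find_le hn
      have hmem_lt : ∀ i, i < j → u i ∈ s := by
        intro i hi
        rcases hus i with h | h
        · exact h
        · exact absurd h (Nat.find_min hex hi)
      have hmem_ge : ∀ i, j ≤ i → u i = m := by
        intro i hi
        exact le_antisymm (hle i) (hj ▸ hu hi)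
      rcases Nat.eq_zero_or_eq_succ_pred j with hj0 | hjsucc
      · -- j = 0 : all points equal m, sum is zero
        have : ∀ i ∈ Finset.range n, edist (v (u (i+1))) (v (u i)) = 0 := by
          intro i _
          rw [hmem_ge (i+1) (hj0 ▸ Nat.zero_le _), hmem_ge i (hj0 ▸ Nat.zero_le _), edist_self]
        rw [Finset.sum_congr rfl this, Finset.sum_const_zero]
        exact zero_le
      · set k := j - 1 with hkdef
        have hjk : j = k + 1 := hjsucc
        have hkn : k < n := by omega
        have huk : u k ∈ s := hmem_lt k (by omega)
        obtain ⟨z, hzs, hzk, hzL⟩ := hfind (η/2) (ENNReal.half_pos hη'.ne') (u k) (hs huk)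
        -- split the sum
        have hsplit : ∑ i ∈ Finset.range n, edist (v (u (i+1))) (v (u i)) =
            (∑ i ∈ Finset.range k, edist (v (u (i+1))) (v (u i)))
              + edist (v (u (k+1))) (v (u k)) := by
          rw [Finset.range_eq_Ico, ← Finset.sum_Ico_consecutive _ (Nat.zero_le (k+1)) hkn,
            ← Finset.range_eq_Ico]
          have hzero : ∑ i ∈ Finset.Ico (k+1) n, edist (v (u (i+1))) (v (u i)) = 0 := by
            apply Finset.sum_eq_zero
            intro i hi
            have hi' := Finset.mem_Ico.mp hi
            rw [hmem_ge i (by omega), hmem_ge (i+1) (by omega), edist_self]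
          rw [hzero, add_zero, Finset.sum_range_succ]
        rw [hsplit]
        -- the truncated partition extended by z
        have hsum1 : (∑ i ∈ Finset.range k, edist (v (u (i+1))) (v (u i)))
            + edist (v z) (v (u k)) ≤ eVariationOn v s := by
          set w : ℕ → ℝ := fun i => if i ≤ k then u i else z with hwdef
          have hwmono : Monotone w := by
            intro p q hpq
            simp only [hwdef]
            by_cases hp : p ≤ k <;> by_cases hq : q ≤ k <;> simp [hp, hq]
            · exact hu hpq
            · exact le_of_lt (lt_of_le_of_lt (hu hp) hzk)
            · omega
          have hwmem : ∀ i, w i ∈ s := by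
            intro i
            simp only [hwdef]
            by_cases hp : i ≤ k <;> simp [hp]
            · exact hmem_lt i (by omega)
            · exact hzs
          have := eVariationOn.sum_le (f := v) (n := k+1) hwmono hwmem
          rw [Finset.sum_range_succ] at this
          refine le_trans (le_of_eq ?_) this
          congr 1
          · apply Finset.sum_congr rfl
            intro i hi
            have : i < k := Finset.mem_range.mp hi
            simp only [hwdef]
            rw [if_pos (by omega : i ≤ k), if_pos (by omega : i + 1 ≤ k)]
          · simp only [hwdef]
            rw [if_pos (le_refl k), if_neg (by omega : ¬ k + 1 ≤ k)]
        -- triangle inequality for the last term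
        have htri : edist (v (u (k+1))) (v (u k)) ≤
            edist L (v m) + ↑η/2 + edist (v z) (v (u k)) := by
          have h1 : u (k+1) = m := hmem_ge (k+1) (by omega)
          rw [h1]
          calc edist (v m) (v (u k)) ≤ edist (v m) (v z) + edist (v z) (v (u k)) :=
                edist_triangle _ _ _
          _ ≤ (edist (v m) L + edist L (v z)) + edist (v z) (v (u k)) := by
                gcongr; exact edist_triangle _ _ _
          _ ≤ (edist L (v m) + ↑η/2) + edist (v z) (v (u k)) := by
                rw [edist_comm (v m) L]; gcongr; rw [edist_comm]; exact hzL.le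
        calc (∑ i ∈ Finset.range k, edist (v (u (i+1))) (v (u i)))
              + edist (v (u (k+1))) (v (u k))
            ≤ (∑ i ∈ Finset.range k, edist (v (u (i+1))) (v (u i)))
              + (edist L (v m) + ↑η/2 + edist (v z) (v (u k))) := by gcongr
          _ = ((∑ i ∈ Finset.range k, edist (v (u (i+1))) (v (u i)))
              + edist (v z) (v (u k))) + edist L (v m) + ↑η/2 := by ring
          _ ≤ eVariationOn v s + edist L (v m) + ↑η/2 := by gcongr
          _ ≤ eVariationOn v s + edist L (v m) + ↑η := by
              gcongr
              exact ENNReal.half_le_self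
    · -- all points in s (truncate at n)
      have hmem : ∀ i, u (min i n) ∈ s := by
        intro i
        have h1 : u (min i n) ≤ u n := hu (min_le_right i n)
        have h2 : u n < m := lt_of_le_of_ne (hle n) hn
        rcases hus (min i n) with h | h
        · exact h
        · exact absurd h (by simp only [mem_singleton_iff]; intro hc; rw [hc] at h1; linarith)
      have hmono : Monotone (fun i => u (min i n)) := fun p q hpq => hu (min_le_min_right n hpq)
      have := eVariationOn.sum_le (f := v) (n := n) hmono hmem
      refine le_trans (le_trans (le_of_eq ?_) this) (le_trans le_self_add le_self_add)
      apply Finset.sum_congr rfl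
      intro i hi
      have hi' : i < n := Finset.mem_range.mp hi
      rw [min_eq_left hi'.le, min_eq_left hi']
  · -- ≥ direction
    have hvar : eVariationOn v s + edist L (v m) =
        ⨆ p : ℕ × { u : ℕ → ℝ // Monotone u ∧ ∀ i, u i ∈ s },
          ((∑ i ∈ Finset.range p.1, edist (v (p.2.1 (i+1))) (v (p.2.1 i))) + edist L (v m)) := by
      haveI : Nonempty { u : ℕ → ℝ // Monotone u ∧ ∀ i, u i ∈ s } :=
        eVariationOn.nonempty_monotone_mem hsne
      rw [eVariationOn, ENNReal.iSup_add]
    rw [hvar]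
    apply iSup_le
    rintro ⟨n, u, hu, hus⟩
    dsimp only
    apply ENNReal.le_of_forall_pos_le_add
    intro η hη _
    have hη' : (0:ℝ≥0∞) < η := ENNReal.coe_pos.mpr hη
    obtain ⟨z, hzs, hzn, hzL⟩ := hfind η hη' (u n) (hs (hus n))
    set w : ℕ → ℝ := fun i => if i ≤ n then u i else if i = n + 1 then z else m with hwdef
    have hwle : ∀ i, w i ≤ w (i+1) := by
      intro i
      simp only [hwdef]
      split_ifs with h1 h2 h3 h4 h5 <;> try omega
      · exact hu (by omega)
      · have : i = n := by omega
        subst this; exact hzn.le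
      · exact (hs hzs).le
      · exact le_refl m
    have hwmono : Monotone w := monotone_nat_of_le_succ hwle
    have hwmem : ∀ i, w i ∈ s ∪ {m} := by
      intro i
      simp only [hwdef]
      split_ifs with h1 h2
      · exact Or.inl (hus i)
      · exact Or.inl hzs
      · exact Or.inr rfl
    have hkey := eVariationOn.sum_le (f := v) (n := n+2) hwmono hwmem
    rw [Finset.sum_range_succ, Finset.sum_range_succ] at hkey
    have he1 : ∀ i ∈ Finset.range n, edist (v (w (i+1))) (v (w i)) = edist (v (u (i+1))) (v (u i)) := by
      intro i hi
      have hi' : i < n := Finset.mem_range.mp hi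
      simp only [hwdef]
      rw [if_pos (by omega : i + 1 ≤ n), if_pos (by omega : i ≤ n)]
    rw [Finset.sum_congr rfl he1] at hkey
    have he2 : w (n+1) = z := by
      simp only [hwdef]; rw [if_neg (by omega)]; simp
    have he3 : w n = u n := by simp only [hwdef]; rw [if_pos (le_refl n)]
    have he4 : w (n+2) = m := by
      simp only [hwdef]; rw [if_neg (by omega), if_neg (by omega)]
    rw [he2, he3, he4] at hkey
    -- now: sum + edist (v z) (v (u n)) + edist (v m) (v z) ≤ eVariationOn v (s ∪ {m})
    have htri : edist L (v m) ≤ edist (v z) (v (u n)) + edist (v m) (v z) + ↑η := by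
      calc edist L (v m) ≤ edist L (v z) + edist (v z) (v m) := edist_triangle _ _ _
        _ ≤ (η:ℝ≥0∞) + edist (v z) (v m) := by gcongr; rw [edist_comm]; exact hzL.le
        _ = edist (v m) (v z) + (η:ℝ≥0∞) := by rw [edist_comm (v z) (v m)]; ring
        _ ≤ edist (v z) (v (u n)) + edist (v m) (v z) + (η:ℝ≥0∞) := by
            gcongr; exact le_add_self
    calc (∑ i ∈ Finset.range n, edist (v (u (i+1))) (v (u i))) + edist L (v m)
        ≤ (∑ i ∈ Finset.range n, edist (v (u (i+1))) (v (u i)))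
          + (edist (v z) (v (u n)) + edist (v m) (v z) + ↑η) := by gcongr
      _ = ((∑ i ∈ Finset.range n, edist (v (u (i+1))) (v (u i)))
          + edist (v z) (v (u n)) + edist (v m) (v z)) + ↑η := by ring
      _ ≤ eVariationOn v (s ∪ {m}) + ↑η := by gcongr

lemma evar_union_point_left (v : ℝ → E) {s : Set ℝ} {m : ℝ} (hs : s ⊆ Ioi m)
    (hne : ∀ z, m < z → (s ∩ Ioo m z).Nonempty) {R : E}
    (hR : Tendsto v (nhdsWithin m s) (nhds R)) :
    eVariationOn v (s ∪ {m}) = eVariationOn v s + edist (v m) R := by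
  have hnegneg : (Neg.neg '' (Neg.neg '' s) : Set ℝ) = s := by
    rw [Set.image_image]; simp
  have htneg : Tendsto (Neg.neg : ℝ → ℝ) (nhdsWithin (-m) (Neg.neg '' s)) (nhdsWithin m s) := by
    apply Filter.Tendsto.inf
    · simpa using (continuous_neg.tendsto (-m))
    · refine Filter.tendsto_principal_principal.mpr ?_
      rintro y ⟨x, hx, rfl⟩
      simpa using hx
  have key := evar_union_point_right (fun y => v (-y)) (s := Neg.neg '' s) (m := -m)
    (by rintro y ⟨x, hx, rfl⟩; simpa using hs hx)
    (by
      intro z hz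
      obtain ⟨y, hy, hy2⟩ := hne (-z) (by linarith)
      exact ⟨-y, ⟨y, hy, rfl⟩, by constructor <;> [linarith [hy2.2]; linarith [hy2.1]]⟩)
    (L := R) (hR.comp htneg)
  have h1 : eVariationOn (fun y => v (-y)) (Neg.neg '' s ∪ {-m}) = eVariationOn v (s ∪ {m}) := by
    rw [evar_neg_comp]
    congr 1
    rw [Set.image_union, hnegneg]
    simp
  have h2 : eVariationOn (fun y => v (-y)) (Neg.neg '' s) = eVariationOn v s := by
    rw [evar_neg_comp, hnegneg]
  rw [h1, h2] at key
  rw [key]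
  congr 1
  simp [edist_comm]

/-- decomposition of variation on `Ioo a b` at an interior point `x` with one-sided limits,
and a further point `m` to the right with a left limit there. -/
lemma evar_Ioo_decomp (v : ℝ → E) {a x m b : ℝ} (h1 : a < x) (h2 : x < m) (h3 : m < b)
    {Mx Rx Lm : E}
    (hMx : Tendsto v (nhdsWithin x (Iio x)) (nhds Mx))
    (hRx : Tendsto v (nhdsWithin x (Ioi x)) (nhds Rx))
    (hLm : Tendsto v (nhdsWithin m (Iio m)) (nhds Lm)) :
    eVariationOn v (Ioo a b) =
      (eVariationOn v (Ioo a x) + edist Mx (v x)) +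
      ((((eVariationOn v (Ioo x m) + edist Lm (v m)) + eVariationOn v (Ico m b))
        + edist (v x) Rx)) := by
  have e1 : eVariationOn v (Ioo a b) = eVariationOn v (Ioc a x) + eVariationOn v (Ico x b) := by
    rw [← eVariationOn.union v (isGreatest_Ioc h1) (isLeast_Ico (h2.trans h3)),
      Ioc_union_Ico_eq_Ioo h1 (h2.trans h3)]
  have e2 : eVariationOn v (Ioc a x) = eVariationOn v (Ioo a x) + edist Mx (v x) := by
    rw [← Ioo_union_right h1]
    apply evar_union_point_right v Ioo_subset_Iio_self
    · intro z hz
      refine ⟨(max a z + x)/2, ⟨?_, ?_⟩, ?_, ?_⟩ <;>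
        [linarith [le_max_left a z]; linarith [max_lt h1 hz]; linarith [le_max_right a z];
         linarith [max_lt h1 hz]]
    · exact hMx.mono_left (nhdsWithin_mono _ Ioo_subset_Iio_self)
  have e3 : eVariationOn v (Ico x b) = eVariationOn v (Ioo x b) + edist (v x) Rx := by
    rw [← Ioo_union_left (h2.trans h3)]
    apply evar_union_point_left v Ioo_subset_Ioi_self
    · intro z hz
      refine ⟨(x + min b z)/2, ⟨?_, ?_⟩, ?_, ?_⟩ <;>
        [linarith [lt_min (h2.trans h3) hz]; linarith [min_le_left b z];
         linarith [lt_min (h2.trans h3) hz]; linarith [min_le_right b z]]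
    · exact hRx.mono_left (nhdsWithin_mono _ Ioo_subset_Ioi_self)
  have e4 : eVariationOn v (Ioo x b) = eVariationOn v (Ioc x m) + eVariationOn v (Ico m b) := by
    rw [← eVariationOn.union v (isGreatest_Ioc h2) (isLeast_Ico h3),
      Ioc_union_Ico_eq_Ioo h2 h3]
  have e5 : eVariationOn v (Ioc x m) = eVariationOn v (Ioo x m) + edist Lm (v m) := by
    rw [← Ioo_union_right h2]
    apply evar_union_point_right v Ioo_subset_Iio_self
    · intro z hz
      refine ⟨(max x z + m)/2, ⟨?_, ?_⟩, ?_, ?_⟩ <;>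
        [linarith [le_max_left x z]; linarith [max_lt h2 hz]; linarith [le_max_right x z];
         linarith [max_lt h2 hz]]
    · exact hLm.mono_left (nhdsWithin_mono _ Ioo_subset_Iio_self)
  rw [e1, e2, e3, e4, e5]

end EVarHelpers

/-! ### Reflection and minimizer helper lemmas -/

section Transfer

lemma negEmb : MeasurableEmbedding (fun x : ℝ => -x) :=
  (Homeomorph.neg ℝ).isClosedEmbedding.measurableEmbedding

lemma refl_setIntegral {F : Type*} [NormedAddCommGroup F] [NormedSpace ℝ F]
    (a b : ℝ) (g : ℝ → F) :
    ∫ y in Ioo (-b) (-a), g (-y) = ∫ y in Ioo a b, g y := by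
  have hpre : (fun x : ℝ => -x) ⁻¹' (Ioo a b) = Ioo (-b) (-a) := by
    ext y; simp only [mem_preimage, mem_Ioo]
    constructor <;> intro h <;> constructor <;> linarith [h.1, h.2]
  have := negEmb.setIntegral_map (μ := volume) g (Ioo a b)
  rw [Measure.map_neg_eq_self (volume : Measure ℝ), hpre] at this
  exact this.symm

lemma refl_integrableOn {g : ℝ → ℝ} {a b : ℝ} (h : IntegrableOn g (Ioo a b)) :
    IntegrableOn (fun y => g (-y)) (Ioo (-b) (-a)) := by
  have hpre : (fun x : ℝ => -x) ⁻¹' (Ioo a b) = Ioo (-b) (-a) := by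
    ext y; simp only [mem_preimage, mem_Ioo]
    constructor <;> intro h <;> constructor <;> linarith [h.1, h.2]
  have := (Measure.measurePreserving_neg (volume : Measure ℝ)).integrableOn_comp_preimage negEmb
    (f := g) (s := Ioo a b)
  rw [hpre] at this
  exact this.mpr h

lemma refl_sqIntOn {n : ℕ} {v : ℝ → EuclideanSpace ℝ (Fin n)} {a b : ℝ}
    (h : SqIntOn v (Ioo a b)) : SqIntOn (fun y => v (-y)) (Ioo (-b) (-a)) := by
  unfold SqIntOn at h ⊢
  exact refl_integrableOn (g := fun x => ‖v x‖ ^ 2) h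

lemma refl_rofEnergy {n : ℕ} (lam a b : ℝ) (f w : ℝ → EuclideanSpace ℝ (Fin n)) :
    rofEnergy lam (-b) (-a) (fun y => f (-y)) (fun y => w (-y)) = rofEnergy lam a b f w := by
  unfold rofEnergy
  congr 1
  · rw [evar_neg_comp]
    congr 1
    rw [Set.image_neg_Ioo]
    simp
  · congr 1
    rw [show (∫ x in Ioo (-b) (-a), ‖w (-x) - f (-x)‖ ^ 2)
        = ∫ x in Ioo a b, ‖w x - f x‖ ^ 2 from refl_setIntegral a b (fun y => ‖w y - f y‖^2)]

lemma refl_isMinimizer {n : ℕ} {lam a b : ℝ} {f u : ℝ → EuclideanSpace ℝ (Fin n)}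
    (h : IsMinimizer lam a b f u) :
    IsMinimizer lam (-b) (-a) (fun y => f (-y)) (fun y => u (-y)) := by
  obtain ⟨hmeas, hsq, hmin⟩ := h
  refine ⟨hmeas.comp measurable_neg, refl_sqIntOn hsq, ?_⟩
  intro w hw hwsq
  have hwsq' : SqIntOn (fun y => w (-y)) (Ioo a b) := by
    have := refl_sqIntOn (v := w) (a := -b) (b := -a) hwsq
    simpa using this
  calc rofEnergy lam (-b) (-a) (fun y => f (-y)) (fun y => u (-y))
      = rofEnergy lam a b f u := refl_rofEnergy lam a b f u
    _ ≤ rofEnergy lam a b f (fun y => w (-y)) := hmin _ (hw.comp measurable_neg) hwsq'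
    _ = rofEnergy lam (-b) (-a) (fun y => f (-y)) (fun y => w (- -y)) :=
        (refl_rofEnergy lam a b f (fun y => w (-y))).symm
    _ = rofEnergy lam (-b) (-a) (fun y => f (-y)) w := by simp only [neg_neg]

lemma bv_of_min {n : ℕ} {lam a b : ℝ} {f u : ℝ → EuclideanSpace ℝ (Fin n)}
    (hu : IsMinimizer lam a b f u) : eVariationOn u (Set.Ioo a b) ≠ ⊤ := by
  have h0meas : Measurable (fun _ : ℝ => (0 : EuclideanSpace ℝ (Fin n))) := measurable_const
  have h0sq : SqIntOn (fun _ : ℝ => (0 : EuclideanSpace ℝ (Fin n))) (Set.Ioo a b) := by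
    unfold SqIntOn
    simp only [norm_zero]
    simp [IntegrableOn]
  have hmin := hu.2.2 _ h0meas h0sq
  have hvar0 : eVariationOn (fun _ : ℝ => (0 : EuclideanSpace ℝ (Fin n))) (Set.Ioo a b) = 0 :=
    eVariationOn.constant_on (by
      intro p hp q hq
      obtain ⟨_, _, rfl⟩ := hp
      obtain ⟨_, _, rfl⟩ := hq
      rfl)
  have : rofEnergy lam a b f u < ⊤ := by
    refine lt_of_le_of_lt hmin ?_
    unfold rofEnergy
    rw [hvar0]
    simp [ENNReal.ofReal_lt_top]
  intro hc
  rw [rofEnergy, hc] at this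
  simp at this

lemma tendsto_neg_Iio (x : ℝ) :
    Tendsto (fun y : ℝ => -y) (nhdsWithin (-x) (Iio (-x))) (nhdsWithin x (Ioi x)) := by
  apply Filter.Tendsto.inf
  · simpa using (continuous_neg.tendsto (-x))
  · refine Filter.tendsto_principal_principal.mpr ?_
    intro y hy
    simp only [mem_Iio] at hy
    simp only [mem_Ioi]
    linarith

lemma tendsto_neg_Ioi (x : ℝ) :
    Tendsto (fun y : ℝ => -y) (nhdsWithin (-x) (Ioi (-x))) (nhdsWithin x (Iio x)) := by
  apply Filter.Tendsto.inf
  · simpa using (continuous_neg.tendsto (-x))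
  · refine Filter.tendsto_principal_principal.mpr ?_
    intro y hy
    simp only [mem_Ioi] at hy
    simp only [mem_Iio]
    linarith

end Transfer

open scoped RealInnerProductSpace in
set_option maxHeartbeats 1000000 in
/-- Core variational inequality: at a jump point of the minimizer, the right limit of `u`
cannot be on the far side of the right limit of `f` in the jump direction. -/
lemma core_right {n : ℕ} {lam a b : ℝ} (hlam : 0 < lam)
    {f u : ℝ → EuclideanSpace ℝ (Fin n)}
    (hf_meas : Measurable f) (hf_sq : SqIntOn f (Set.Ioo a b))
    (hu : IsMinimizer lam a b f u) {x : ℝ} (hx : x ∈ Set.Ioo a b)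
    {Mm Mp Lp : EuclideanSpace ℝ (Fin n)}
    (hMm : Tendsto u (nhdsWithin x (Iio x)) (nhds Mm))
    (hMp : Tendsto u (nhdsWithin x (Ioi x)) (nhds Mp))
    (hLp : Tendsto f (nhdsWithin x (Ioi x)) (nhds Lp)) :
    ⟪Mp - Lp, Mp - Mm⟫ ≤ (0:ℝ) := by
  by_cases hp0 : Mp - Mm = 0
  · rw [hp0, inner_zero_right]
  set p := Mp - Mm with hpdef
  have hpnorm : 0 < ‖p‖ := norm_pos_iff.mpr hp0
  set e : EuclideanSpace ℝ (Fin n) := ‖p‖⁻¹ • p with hedef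
  have he : ‖e‖ = 1 := norm_smul_inv_norm (𝕜 := ℝ) hp0
  by_contra hcon
  push_neg at hcon
  set α : ℝ := ⟪Mp - Lp, e⟫ with hαdef
  have hα : 0 < α := by
    rw [hαdef, hedef, real_inner_smul_right]
    exact mul_pos (inv_pos.mpr hpnorm) hcon
  have hvarU : eVariationOn u (Set.Ioo a b) ≠ ⊤ := bv_of_min hu
  set t : ℝ := min (α/2) ‖p‖ with htdef
  have ht0 : 0 < t := lt_min (by linarith) hpnorm
  have htα : t < α := lt_of_le_of_lt (min_le_left _ _) (by linarith)
  have htp : t ≤ ‖p‖ := min_le_right _ _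
  -- choose m with the fidelity bound
  have hconv : Tendsto (fun y => ⟪u y - f y, e⟫) (nhdsWithin x (Ioi x)) (nhds α) :=
    Filter.Tendsto.inner (hMp.sub hLp) tendsto_const_nhds
  have hev : ∀ᶠ y in nhdsWithin x (Ioi x), α/2 < ⟪u y - f y, e⟫ :=
    hconv.eventually_const_lt (by linarith)
  rw [Filter.eventually_iff, mem_nhdsGT_iff_exists_Ioo_subset] at hev
  obtain ⟨m0, hm0x, hsub⟩ := hev
  set m : ℝ := min m0 ((x + b)/2) with hmdef
  have hxm : x < m := lt_min hm0x (by linarith [hx.2])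
  have hmb : m < b := lt_of_le_of_lt (min_le_right _ _) (by linarith [hx.2])
  have hbnd : ∀ y ∈ Ioo x m, α/2 ≤ ⟪u y - f y, e⟫ := fun y hy =>
    (hsub ⟨hy.1, lt_of_lt_of_le hy.2 (min_le_left _ _)⟩).le
  -- the left limit of u at m
  have hvarIoo : eVariationOn u (Ioo a m) ≠ ⊤ :=
    fun hc => hvarU (top_le_iff.mp (hc ▸ eVariationOn.mono u
      (Ioo_subset_Ioo le_rfl hmb.le)))
  obtain ⟨Lum, hLum⟩ := exists_left_lim u (lt_trans hx.1 hxm) hvarIoo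
  -- the competitor
  set w : ℝ → EuclideanSpace ℝ (Fin n) := fun y =>
    if y ∈ Ioo x m then u y - t • e else if y = x then Mp - t • e else u y with hwdef
  have hwmeas : Measurable w := by
    apply Measurable.ite measurableSet_Ioo (hu.1.sub measurable_const)
    exact Measurable.ite (by simp only [setOf_eq_eq_singleton]; exact measurableSet_singleton x)
      measurable_const hu.1
  have hw1 : EqOn w u (Ioo a x) := by
    intro y hy
    have h1 : y ∉ Ioo x m := fun hc => absurd hy.2 (not_lt.mpr hc.1.le)
    have h2 : y ≠ x := ne_of_lt hy.2
    simp only [hwdef, if_neg h1, if_neg h2]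
  have hw2 : EqOn w (fun y => u y - t • e) (Ioo x m) := by
    intro y hy
    simp only [hwdef, if_pos hy]
  have hw3 : EqOn w u (Ico m b) := by
    intro y hy
    have h1 : y ∉ Ioo x m := fun hc => absurd hc.2 (not_lt.mpr hy.1)
    have h2 : y ≠ x := ne_of_gt (lt_of_lt_of_le hxm hy.1)
    simp only [hwdef, if_neg h1, if_neg h2]
  have hwx : w x = Mp - t • e := by
    have h1 : x ∉ Ioo x m := fun hc => absurd hc.1 (lt_irrefl x)
    simp only [hwdef, if_neg h1]
    simp
  -- limits of w
  have hWMx : Tendsto w (nhdsWithin x (Iio x)) (nhds Mm) := by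
    refine hMm.congr' (EventuallyEq.symm ?_)
    exact eventuallyEq_of_mem (Ioo_mem_nhdsLT_of_mem ⟨hx.1, le_rfl⟩) hw1
  have hWRx : Tendsto w (nhdsWithin x (Ioi x)) (nhds (Mp - t • e)) := by
    refine (hMp.sub tendsto_const_nhds).congr' (EventuallyEq.symm ?_)
    exact eventuallyEq_of_mem (Ioo_mem_nhdsGT_of_mem ⟨le_rfl, hxm⟩) hw2
  have hWLm : Tendsto w (nhdsWithin m (Iio m)) (nhds (Lum - t • e)) := by
    refine (hLum.sub tendsto_const_nhds).congr' (EventuallyEq.symm ?_)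
    exact eventuallyEq_of_mem (Ioo_mem_nhdsLT_of_mem ⟨hxm, le_rfl⟩) hw2
  -- decompositions
  have hdecompU := evar_Ioo_decomp u hx.1 hxm hmb hMm hMp hLum
  have hdecompW := evar_Ioo_decomp w hx.1 hxm hmb hWMx hWRx hWLm
  -- piece identifications
  have hvw1 : eVariationOn w (Ioo a x) = eVariationOn u (Ioo a x) :=
    eVariationOn.eq_of_eqOn hw1
  have hvw2 : eVariationOn w (Ioo x m) = eVariationOn u (Ioo x m) :=
    (eVariationOn.eq_of_eqOn hw2).trans (evar_sub_const u (Ioo x m) (t • e))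
  have hvw3 : eVariationOn w (Ico m b) = eVariationOn u (Ico m b) :=
    eVariationOn.eq_of_eqOn hw3
  have hwm : w m = u m := hw3 ⟨le_rfl, hmb⟩
  -- edist computations
  have hnormpt : ‖p - t • e‖ = ‖p‖ - t := by
    have : p - t • e = (1 - t * ‖p‖⁻¹) • p := by
      rw [hedef, smul_smul, sub_smul, one_smul]
    rw [this, norm_smul, Real.norm_eq_abs, abs_of_nonneg]
    · field_simp
    · have h2 : t * ‖p‖⁻¹ ≤ ‖p‖ * ‖p‖⁻¹ := by gcongr
      rw [mul_inv_cancel₀ hpnorm.ne'] at h2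
      linarith
  have hjump : edist Mm (w x) = ENNReal.ofReal (‖p‖ - t) := by
    rw [hwx, edist_dist, dist_eq_norm]
    congr 1
    rw [show Mm - (Mp - t • e) = -(p - t • e) by rw [hpdef]; abel, norm_neg, hnormpt]
  have hjx : edist (w x) (Mp - t • e) = 0 := by rw [hwx, edist_self]
  have hte : edist (Lum - t • e) Lum = ENNReal.ofReal t := by
    rw [edist_dist, dist_eq_norm]
    congr 1
    rw [show Lum - t • e - Lum = -(t • e) by abel, norm_neg, norm_smul, Real.norm_eq_abs,
      abs_of_nonneg ht0.le, he, mul_one]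
  have hm_est : edist (Lum - t • e) (u m) ≤ ENNReal.ofReal t + edist Lum (u m) := by
    calc edist (Lum - t • e) (u m) ≤ edist (Lum - t • e) Lum + edist Lum (u m) :=
          edist_triangle _ _ _
      _ = ENNReal.ofReal t + edist Lum (u m) := by rw [hte]
  have htotal : ENNReal.ofReal (‖p‖ - t) + ENNReal.ofReal t
      ≤ edist Mm (u x) + edist (u x) Mp := by
    have h1 : ENNReal.ofReal (‖p‖ - t) + ENNReal.ofReal t = ENNReal.ofReal ‖p‖ := by
      rw [← ENNReal.ofReal_add (by linarith) ht0.le]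
      congr 1
      ring
    have h2 : edist Mm Mp = ENNReal.ofReal ‖p‖ := by
      rw [edist_dist, dist_eq_norm, ← norm_neg]
      congr 2
      rw [hpdef]; abel
    rw [h1, ← h2]
    exact edist_triangle _ _ _
  -- variation comparison
  have hvarle : eVariationOn w (Set.Ioo a b) ≤ eVariationOn u (Set.Ioo a b) := by
    rw [hdecompW, hdecompU, hvw1, hvw2, hvw3, hwm, hjump, hjx, add_zero]
    calc eVariationOn u (Ioo a x) + ENNReal.ofReal (‖p‖ - t) +
          ((eVariationOn u (Ioo x m) + edist (Lum - t • e) (u m)) + eVariationOn u (Ico m b))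
        ≤ eVariationOn u (Ioo a x) + ENNReal.ofReal (‖p‖ - t) +
          ((eVariationOn u (Ioo x m) + (ENNReal.ofReal t + edist Lum (u m)))
            + eVariationOn u (Ico m b)) := by gcongr
      _ = (eVariationOn u (Ioo a x) + ((eVariationOn u (Ioo x m) + edist Lum (u m))
            + eVariationOn u (Ico m b))) + (ENNReal.ofReal (‖p‖ - t) + ENNReal.ofReal t) := by
          ring
      _ ≤ (eVariationOn u (Ioo a x) + ((eVariationOn u (Ioo x m) + edist Lum (u m))
            + eVariationOn u (Ico m b))) + (edist Mm (u x) + edist (u x) Mp) := by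
          gcongr
      _ = eVariationOn u (Ioo a x) + edist Mm (u x) +
          (((eVariationOn u (Ioo x m) + edist Lum (u m)) + eVariationOn u (Ico m b))
            + edist (u x) Mp) := by ring
  -- square integrability of w
  set C : ℝ := ‖t • e‖ + ‖Mp - t • e‖ with hCdef
  have hC : 0 ≤ C := add_nonneg (norm_nonneg _) (norm_nonneg _)
  have hwptw : ∀ y, ‖w y‖ ≤ ‖u y‖ + C := by
    intro y
    simp only [hwdef]
    split_ifs with h1 h2
    · calc ‖u y - t • e‖ ≤ ‖u y‖ + ‖t • e‖ := norm_sub_le _ _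
        _ ≤ ‖u y‖ + C := by rw [hCdef]; gcongr; exact le_add_of_nonneg_right (norm_nonneg _)
    · calc ‖Mp - t • e‖ ≤ C := le_add_of_nonneg_left (norm_nonneg _)
        _ ≤ ‖u y‖ + C := le_add_of_nonneg_left (norm_nonneg _)
    · exact le_add_of_nonneg_right hC
  have hwsq : SqIntOn w (Set.Ioo a b) := by
    unfold SqIntOn
    apply Integrable.mono' (g := fun y => 2 * ‖u y‖^2 + 2 * C^2)
    · exact (hu.2.1.const_mul 2).add (integrableOn_const measure_Ioo_lt_top.ne)
    · exact ((hwmeas.norm.pow_const 2).aestronglyMeasurable).restrict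
    · apply ae_of_all
      intro y
      rw [Real.norm_eq_abs, abs_of_nonneg (by positivity)]
      nlinarith [hwptw y, norm_nonneg (u y), norm_nonneg (w y), hC,
        sq_nonneg (‖u y‖ - C), sq_nonneg (‖u y‖ + C)]
  -- integrability facts
  have hufmeas : Measurable (fun y => u y - f y) := hu.1.sub hf_meas
  have hIuf : IntegrableOn (fun y => ‖u y - f y‖^2) (Ioo a b) := by
    apply Integrable.mono' (g := fun y => 2 * ‖u y‖^2 + 2 * ‖f y‖^2)
    · exact (hu.2.1.const_mul 2).add (hf_sq.const_mul 2)
    · exact ((hufmeas.norm.pow_const 2).aestronglyMeasurable).restrict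
    · apply ae_of_all
      intro y
      rw [Real.norm_eq_abs, abs_of_nonneg (by positivity)]
      have := norm_sub_le (u y) (f y)
      nlinarith [norm_nonneg (u y), norm_nonneg (f y), norm_nonneg (u y - f y),
        sq_nonneg (‖u y‖ - ‖f y‖), sq_nonneg (‖u y‖ + ‖f y‖)]
  have hIwf : IntegrableOn (fun y => ‖w y - f y‖^2) (Ioo a b) := by
    apply Integrable.mono' (g := fun y => 4 * ‖u y‖^2 + 4 * C^2 + 2 * ‖f y‖^2)
    · exact ((hu.2.1.const_mul 4).add (integrableOn_const measure_Ioo_lt_top.ne)).add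
        (hf_sq.const_mul 2)
    · exact (((hwmeas.sub hf_meas).norm.pow_const 2).aestronglyMeasurable).restrict
    · apply ae_of_all
      intro y
      rw [Real.norm_eq_abs, abs_of_nonneg (by positivity)]
      have h1 := norm_sub_le (w y) (f y)
      have h2 := hwptw y
      nlinarith [norm_nonneg (u y), norm_nonneg (f y), norm_nonneg (w y),
        norm_nonneg (w y - f y), hC, sq_nonneg (‖u y‖ - C), sq_nonneg (‖w y‖ - ‖f y‖),
        sq_nonneg (‖u y‖ + C - ‖f y‖), sq_nonneg (‖u y‖ + C + ‖f y‖)]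
  have hIinner : IntegrableOn (fun y => ⟪u y - f y, e⟫) (Ioo a b) := by
    apply Integrable.mono' (g := fun y => 1 + ‖u y - f y‖^2)
    · exact (integrableOn_const measure_Ioo_lt_top.ne).add hIuf
    · exact ((hufmeas.inner measurable_const).aestronglyMeasurable).restrict
    · apply ae_of_all
      intro y
      have h1 : |⟪u y - f y, e⟫| ≤ ‖u y - f y‖ * ‖e‖ := abs_real_inner_le_norm _ _
      rw [he, mul_one] at h1
      rw [Real.norm_eq_abs]
      nlinarith [norm_nonneg (u y - f y), abs_nonneg (⟪u y - f y, e⟫)]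
  -- the fidelity difference
  set G : ℝ → ℝ := fun y => 2 * t * ⟪u y - f y, e⟫ - t^2 with hGdef
  have hsubIoo : Ioo x m ⊆ Ioo a b := fun y hy => ⟨lt_trans hx.1 hy.1, lt_trans hy.2 hmb⟩
  have hGint : IntegrableOn G (Ioo x m) := by
    apply Integrable.sub
    · exact (hIinner.mono_set hsubIoo).const_mul (2 * t)
    · exact integrableOn_const measure_Ioo_lt_top.ne
  have hGind : Integrable ((Ioo x m).indicator G) (volume.restrict (Ioo a b)) := by
    rw [integrable_indicator_iff measurableSet_Ioo, IntegrableOn,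
      Measure.restrict_restrict measurableSet_Ioo, inter_eq_self_of_subset_left hsubIoo]
    exact hGint
  have hxae : ∀ᵐ (y : ℝ) ∂(volume.restrict (Ioo a b)), y ≠ x := by
    refine ae_restrict_of_ae ?_
    rw [ae_iff]
    have hset : {y : ℝ | ¬ y ≠ x} = {x} := by ext y; simp
    rw [hset]
    exact measure_singleton x
  have heq : ∀ᵐ y ∂(volume.restrict (Ioo a b)),
      ‖w y - f y‖^2 = ‖u y - f y‖^2 - (Ioo x m).indicator G y := by
    filter_upwards [hxae] with y hy
    by_cases hy2 : y ∈ Ioo x m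
    · rw [indicator_of_mem hy2, hw2 hy2]
      have harr : u y - t • e - f y = (u y - f y) - t • e := by abel
      rw [harr, norm_sub_sq_real (u y - f y) (t • e), real_inner_smul_right, norm_smul,
        Real.norm_eq_abs, abs_of_nonneg ht0.le, he, mul_one, hGdef]
      ring
    · rw [indicator_of_notMem hy2, sub_zero]
      have hwy : w y = u y := by simp only [hwdef, if_neg hy2, if_neg hy]
      rw [hwy]
  have hint_eq : ∫ y in Ioo a b, ‖w y - f y‖^2 =
      (∫ y in Ioo a b, ‖u y - f y‖^2) - ∫ y in Ioo a b, (Ioo x m).indicator G y := by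
    rw [← integral_sub hIuf hGind]
    exact integral_congr_ae heq
  have hind_eq : ∫ y in Ioo a b, (Ioo x m).indicator G y = ∫ y in Ioo x m, G y := by
    rw [setIntegral_indicator measurableSet_Ioo, inter_eq_self_of_subset_right hsubIoo]
  have hvol : (volume (Ioo x m)).toReal = m - x := by
    rw [Real.volume_Ioo, ENNReal.toReal_ofReal (by linarith)]
  have hinner_lb : α/2 * (m - x) ≤ ∫ y in Ioo x m, ⟪u y - f y, e⟫ := by
    have := setIntegral_ge_of_const_le (c := α/2) measurableSet_Ioo
      (by rw [Real.volume_Ioo]; exact ENNReal.ofReal_ne_top) hbnd (hIinner.mono_set hsubIoo)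
    rwa [measureReal_def, hvol, smul_eq_mul, mul_comm] at this
  have hGlb : t * (α - t) * (m - x) ≤ ∫ y in Ioo x m, G y := by
    have hGsplit : ∫ y in Ioo x m, G y
        = 2 * t * (∫ y in Ioo x m, ⟪u y - f y, e⟫) - t^2 * (m - x) := by
      rw [hGdef]
      rw [integral_sub ((hIinner.mono_set hsubIoo).const_mul (2*t))
        (integrableOn_const measure_Ioo_lt_top.ne)]
      rw [integral_const_mul, setIntegral_const, smul_eq_mul, measureReal_def, hvol]
      ring
    rw [hGsplit]
    nlinarith [hinner_lb, ht0, htα, hxm]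
  have hGpos : 0 < t * (α - t) * (m - x) :=
    mul_pos (mul_pos ht0 (by linarith)) (by linarith)
  have hFlt : (∫ y in Ioo a b, ‖w y - f y‖^2) < ∫ y in Ioo a b, ‖u y - f y‖^2 := by
    rw [hint_eq, hind_eq]
    linarith [hGlb, hGpos]
  have hFw0 : 0 ≤ ∫ y in Ioo a b, ‖w y - f y‖^2 :=
    setIntegral_nonneg measurableSet_Ioo (fun y _ => by positivity)
  have hfac : 0 < 1 / (2 * lam) := by positivity
  have hE : rofEnergy lam a b f w < rofEnergy lam a b f u := by
    unfold rofEnergy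
    apply ENNReal.add_lt_add_of_le_of_lt (ne_top_of_le_ne_top hvarU hvarle) hvarle
    have hFu0 : 0 < (1 / (2*lam)) * ∫ y in Ioo a b, ‖u y - f y‖^2 :=
      mul_pos hfac (lt_of_le_of_lt hFw0 hFlt)
    exact (ENNReal.ofReal_lt_ofReal_iff hFu0).mpr (mul_lt_mul_of_pos_left hFlt hfac)
  exact absurd (hu.2.2 w hwmeas hwsq) (not_le.mpr hE)

/-- jumps of the ROF minimizer are bounded by jumps of the datum:
if `f` has one-sided limits at `x ∈ U`, so does `u`, and the jump of `u` at `x`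
is bounded by that of `f`. -/
theorem jump_of_minimizer_le_jump_of_datum
    {n : ℕ} (hn : 1 ≤ n) (a b : ℝ) (hab : a < b) (lam : ℝ) (hlam : 0 < lam)
    (f : ℝ → EuclideanSpace ℝ (Fin n)) (hf_meas : Measurable f)
    (hf_sq : SqIntOn f (Set.Ioo a b))
    (u : ℝ → EuclideanSpace ℝ (Fin n)) (hu : IsMinimizer lam a b f u)
    (c d : ℝ) (hU : Set.Ioo c d ⊆ Set.Ioo a b)
    (hfBV : eVariationOn f (Set.Ioo c d) < ⊤)
    (x : ℝ) (hx : x ∈ Set.Ioo c d)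
    (Lminus Lplus : EuclideanSpace ℝ (Fin n))
    (hLminus : Filter.Tendsto f (nhdsWithin x (Set.Iio x)) (nhds Lminus))
    (hLplus : Filter.Tendsto f (nhdsWithin x (Set.Ioi x)) (nhds Lplus)) :
    ∃ Mminus Mplus : EuclideanSpace ℝ (Fin n),
      Filter.Tendsto u (nhdsWithin x (Set.Iio x)) (nhds Mminus) ∧
      Filter.Tendsto u (nhdsWithin x (Set.Ioi x)) (nhds Mplus) ∧
      ‖Mplus - Mminus‖ ≤ ‖Lplus - Lminus‖ := by
  have hxab : x ∈ Set.Ioo a b := hU hx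
  have hvarU : eVariationOn u (Set.Ioo a b) ≠ ⊤ := bv_of_min hu
  have hvarL : eVariationOn u (Ioo a x) ≠ ⊤ := fun hc =>
    hvarU (top_le_iff.mp (hc ▸ eVariationOn.mono u (Ioo_subset_Ioo le_rfl hxab.2.le)))
  have hvarR : eVariationOn u (Ioo x b) ≠ ⊤ := fun hc =>
    hvarU (top_le_iff.mp (hc ▸ eVariationOn.mono u (Ioo_subset_Ioo hxab.1.le le_rfl)))
  obtain ⟨Mm, hMm⟩ := exists_left_lim u hxab.1 hvarL
  obtain ⟨Mp, hMp⟩ := exists_right_lim u hxab.2 hvarR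
  refine ⟨Mm, Mp, hMm, hMp, ?_⟩
  have hA : (inner ℝ (Mp - Lplus) (Mp - Mm) : ℝ) ≤ (0:ℝ) :=
    core_right hlam hf_meas hf_sq hu hxab hMm hMp hLplus
  have hB : (inner ℝ (Mm - Lminus) (Mm - Mp) : ℝ) ≤ (0:ℝ) := by
    have humin' := refl_isMinimizer hu
    have hf_meas' : Measurable (fun y => f (-y)) := hf_meas.comp measurable_neg
    have hf_sq' : SqIntOn (fun y => f (-y)) (Ioo (-b) (-a)) := refl_sqIntOn hf_sq
    have hx' : -x ∈ Set.Ioo (-b) (-a) := ⟨by linarith [hxab.2], by linarith [hxab.1]⟩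
    have h1 : Tendsto (fun y => u (-y)) (nhdsWithin (-x) (Iio (-x))) (nhds Mp) :=
      hMp.comp (tendsto_neg_Iio x)
    have h2 : Tendsto (fun y => u (-y)) (nhdsWithin (-x) (Ioi (-x))) (nhds Mm) :=
      hMm.comp (tendsto_neg_Ioi x)
    have h3 : Tendsto (fun y => f (-y)) (nhdsWithin (-x) (Ioi (-x))) (nhds Lminus) :=
      hLminus.comp (tendsto_neg_Ioi x)
    exact core_right hlam hf_meas' hf_sq' humin' hx' h1 h2 h3
  have hB' : (inner ℝ (Lminus - Mm) (Mp - Mm) : ℝ) ≤ (0:ℝ) := by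
    have hEq : (inner ℝ (Mm - Lminus) (Mm - Mp) : ℝ) = (inner ℝ (Lminus - Mm) (Mp - Mm) : ℝ) := by
      rw [show Lminus - Mm = -(Mm - Lminus) by abel, show Mp - Mm = -(Mm - Mp) by abel,
        inner_neg_neg]
    linarith [hEq ▸ hB]
  have hsum : (inner ℝ (Mp - Lplus) (Mp - Mm) : ℝ) + (inner ℝ (Lminus - Mm) (Mp - Mm) : ℝ) + (inner ℝ (Lplus - Lminus) (Mp - Mm) : ℝ)
      = (inner ℝ (Mp - Mm) (Mp - Mm) : ℝ) := by
    rw [← inner_add_left, ← inner_add_left]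
    congr 1
    abel
  have hq : (inner ℝ (Mp - Mm) (Mp - Mm) : ℝ) ≤ (inner ℝ (Lplus - Lminus) (Mp - Mm) : ℝ) := by linarith
  have hnormsq : (inner ℝ (Mp - Mm) (Mp - Mm) : ℝ) = ‖Mp - Mm‖ * ‖Mp - Mm‖ :=
    real_inner_self_eq_norm_mul_norm _
  have hcs : (inner ℝ (Lplus - Lminus) (Mp - Mm) : ℝ) ≤ ‖Lplus - Lminus‖ * ‖Mp - Mm‖ :=
    real_inner_le_norm _ _
  rcases eq_or_lt_of_le (norm_nonneg (Mp - Mm)) with h0 | h0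
  · rw [← h0]
    exact norm_nonneg _
  · nlinarith
end
end

section
/- Let (f_k) be a sequence of Borel measurable functions ℝ → ℝⁿ, square-integrable on I, converging to f in L²(I,ℝⁿ), i.e. ∫_I ‖f_k − f‖² → 0. For each k let u_k be a minimizer of the energy E_{f_k} (the Rudin–Osher–Fatemi energy with datum f_k), and let u be a minimizer of E_f. Then u_k converges to u in L²(I,ℝⁿ): ∫_I ‖u_k − u‖² → 0 as k → ∞. -/
open MeasureTheory Set Filter
open scoped ENNReal InnerProductSpace

noncomputable section

/-- Pointwise key inequality for stability of ROF minimizers. -/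
private lemma key_pointwise {E : Type*} [NormedAddCommGroup E] [InnerProductSpace ℝ E]
    (U V F G : E) :
    ‖(2:ℝ)⁻¹ • (U + V) - F‖ ^ 2 + ‖(2:ℝ)⁻¹ • (U + V) - G‖ ^ 2 ≤
      ‖U - F‖ ^ 2 + ‖V - G‖ ^ 2 + ‖F - G‖ ^ 2 - 4⁻¹ * ‖U - V‖ ^ 2 := by
  have h1 : (2:ℝ)⁻¹ • (U + V) - F = (2:ℝ)⁻¹ • ((U - F) + (V - G) - (F - G)) := by module
  have h2 : (2:ℝ)⁻¹ • (U + V) - G = (2:ℝ)⁻¹ • ((U - F) + (V - G) + (F - G)) := by module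
  have h3 : U - V = (U - F) - (V - G) + (F - G) := by module
  rw [h1, h2, h3]
  set P := U - F
  set Q := V - G
  set Y := F - G
  have hsmul : ∀ w : E, ‖(2:ℝ)⁻¹ • w‖ ^ 2 = 4⁻¹ * ‖w‖ ^ 2 := by
    intro w
    rw [norm_smul, Real.norm_eq_abs, abs_of_nonneg (by norm_num : (0:ℝ) ≤ (2:ℝ)⁻¹)]
    ring
  rw [hsmul, hsmul]
  have e1 : ‖P + Q - Y‖ ^ 2
      = ‖P‖ ^ 2 + ‖Q‖ ^ 2 + ‖Y‖ ^ 2 + 2 * ⟪P, Q⟫_ℝ - 2 * ⟪P, Y⟫_ℝ - 2 * ⟪Q, Y⟫_ℝ := by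
    rw [norm_sub_sq_real (P + Q) Y, norm_add_sq_real P Q, inner_add_left]; ring
  have e2 : ‖P + Q + Y‖ ^ 2
      = ‖P‖ ^ 2 + ‖Q‖ ^ 2 + ‖Y‖ ^ 2 + 2 * ⟪P, Q⟫_ℝ + 2 * ⟪P, Y⟫_ℝ + 2 * ⟪Q, Y⟫_ℝ := by
    rw [norm_add_sq_real (P + Q) Y, norm_add_sq_real P Q, inner_add_left]; ring
  have e3 : ‖P - Q + Y‖ ^ 2
      = ‖P‖ ^ 2 + ‖Q‖ ^ 2 + ‖Y‖ ^ 2 - 2 * ⟪P, Q⟫_ℝ + 2 * ⟪P, Y⟫_ℝ - 2 * ⟪Q, Y⟫_ℝ := by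
    rw [norm_add_sq_real (P - Q) Y, norm_sub_sq_real P Q, inner_sub_left P Q Y]; ring
  have e4 : ‖P - Q - Y‖ ^ 2
      = ‖P‖ ^ 2 + ‖Q‖ ^ 2 + ‖Y‖ ^ 2 - 2 * ⟪P, Q⟫_ℝ - 2 * ⟪P, Y⟫_ℝ + 2 * ⟪Q, Y⟫_ℝ := by
    rw [norm_sub_sq_real (P - Q) Y, norm_sub_sq_real P Q, inner_sub_left P Q Y]; ring
  have h4 := sq_nonneg ‖P - Q - Y‖
  linarith [e1, e2, e3, e4, h4]

/-- Integrability of the squared norm of a difference. -/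
private lemma sqIntOn_sub_int {n : ℕ} {w z : ℝ → EuclideanSpace ℝ (Fin n)} {s : Set ℝ}
    (hw : Measurable w) (hz : Measurable z) (hws : SqIntOn w s) (hzs : SqIntOn z s) :
    MeasureTheory.IntegrableOn (fun x => ‖w x - z x‖ ^ 2) s := by
  have hb : MeasureTheory.IntegrableOn (fun x => 2 * ‖w x‖ ^ 2 + 2 * ‖z x‖ ^ 2) s :=
    (hws.const_mul 2).add (hzs.const_mul 2)
  refine hb.mono' (((hw.sub hz).norm.pow_const 2).aestronglyMeasurable) ?_
  filter_upwards with x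
  rw [Real.norm_eq_abs, abs_of_nonneg (sq_nonneg _)]
  have h := norm_sub_le (w x) (z x)
  nlinarith [norm_nonneg (w x), norm_nonneg (z x), norm_nonneg (w x - z x),
    sq_nonneg (‖w x‖ - ‖z x‖)]

/-- The midpoint of two square-integrable functions is square-integrable. -/
private lemma sqIntOn_mid {n : ℕ} {w z : ℝ → EuclideanSpace ℝ (Fin n)} {s : Set ℝ}
    (hw : Measurable w) (hz : Measurable z) (hws : SqIntOn w s) (hzs : SqIntOn z s) :
    SqIntOn (fun x => (2:ℝ)⁻¹ • (w x + z x)) s := by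
  have hb : MeasureTheory.IntegrableOn (fun x => 2 * ‖w x‖ ^ 2 + 2 * ‖z x‖ ^ 2) s :=
    (hws.const_mul 2).add (hzs.const_mul 2)
  refine hb.mono' ((((hw.add hz).const_smul ((2:ℝ)⁻¹)).norm.pow_const 2).aestronglyMeasurable) ?_
  filter_upwards with x
  rw [Real.norm_eq_abs, abs_of_nonneg (sq_nonneg _)]
  have h1 : ‖(2:ℝ)⁻¹ • (w x + z x)‖ = 2⁻¹ * ‖w x + z x‖ := by
    rw [norm_smul, Real.norm_eq_abs, abs_of_nonneg (by norm_num : (0:ℝ) ≤ (2:ℝ)⁻¹)]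
  have h2 := norm_add_le (w x) (z x)
  nlinarith [norm_nonneg (w x), norm_nonneg (z x), norm_nonneg (w x + z x),
    sq_nonneg (‖w x‖ - ‖z x‖)]

/-- Variation of the midpoint function: `2 eVar(m) ≤ eVar(w) + eVar(z)`. -/
private lemma evar_mid_le {E : Type*} [NormedAddCommGroup E] [NormedSpace ℝ E]
    (w z : ℝ → E) (s : Set ℝ) :
    eVariationOn (fun x => (2:ℝ)⁻¹ • (w x + z x)) s +
      eVariationOn (fun x => (2:ℝ)⁻¹ • (w x + z x)) s ≤
      eVariationOn w s + eVariationOn z s := by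
  set m := fun x => (2:ℝ)⁻¹ • (w x + z x) with hm
  have hedge : ∀ x y : ℝ,
      edist (m x) (m y) ≤ (edist (w x) (w y) + edist (z x) (z y)) / 2 := by
    intro x y
    rw [ENNReal.le_div_iff_mul_le (Or.inl two_ne_zero) (Or.inl ENNReal.ofNat_ne_top)]
    have hv : (w x - w y) + (z x - z y) = (2:ℝ) • (m x - m y) := by
      simp only [hm]; module
    have hr : 2 * dist (m x) (m y) ≤ dist (w x) (w y) + dist (z x) (z y) := by
      rw [dist_eq_norm, dist_eq_norm, dist_eq_norm]
      calc 2 * ‖m x - m y‖ = ‖(2:ℝ) • (m x - m y)‖ := by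
            rw [norm_smul, Real.norm_eq_abs, abs_of_nonneg (by norm_num : (0:ℝ) ≤ 2)]
        _ = ‖(w x - w y) + (z x - z y)‖ := by rw [hv]
        _ ≤ _ := norm_add_le _ _
    calc edist (m x) (m y) * 2 = ENNReal.ofReal (2 * dist (m x) (m y)) := by
          rw [ENNReal.ofReal_mul (by norm_num : (0:ℝ) ≤ 2), edist_dist]
          norm_num [mul_comm]
      _ ≤ ENNReal.ofReal (dist (w x) (w y) + dist (z x) (z y)) :=
          ENNReal.ofReal_le_ofReal hr
      _ = edist (w x) (w y) + edist (z x) (z y) := by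
          rw [ENNReal.ofReal_add dist_nonneg dist_nonneg, edist_dist, edist_dist]
  have hsup : eVariationOn m s ≤ (eVariationOn w s + eVariationOn z s) / 2 := by
    refine iSup_le ?_
    rintro ⟨N, q, hq, hqs⟩
    calc (∑ i ∈ Finset.range N, edist (m (q (i + 1))) (m (q i)))
        ≤ ∑ i ∈ Finset.range N,
            (edist (w (q (i + 1))) (w (q i)) + edist (z (q (i + 1))) (z (q i))) / 2 :=
          Finset.sum_le_sum fun i _ => hedge _ _
      _ = (∑ i ∈ Finset.range N, edist (w (q (i + 1))) (w (q i)) +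
            ∑ i ∈ Finset.range N, edist (z (q (i + 1))) (z (q i))) / 2 := by
          simp only [div_eq_mul_inv, ← Finset.sum_mul, Finset.sum_add_distrib]
      _ ≤ (eVariationOn w s + eVariationOn z s) / 2 := by
          gcongr
          · exact eVariationOn.sum_le (f := w) (n := N) hq hqs
          · exact eVariationOn.sum_le (f := z) (n := N) hq hqs
  calc eVariationOn m s + eVariationOn m s
      ≤ (eVariationOn w s + eVariationOn z s) / 2 +
        (eVariationOn w s + eVariationOn z s) / 2 := add_le_add hsup hsup
    _ = _ := ENNReal.add_halves _

/-- The total variation of an ROF minimizer is finite. -/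
private lemma tv_ne_top {n : ℕ} {lam a b : ℝ} {f u : ℝ → EuclideanSpace ℝ (Fin n)}
    (hu : IsMinimizer lam a b f u) :
    eVariationOn u (Set.Ioo a b) ≠ ∞ := by
  have h0 : SqIntOn (fun _ => (0 : EuclideanSpace ℝ (Fin n))) (Set.Ioo a b) := by
    unfold SqIntOn
    simpa using (integrableOn_zero : MeasureTheory.IntegrableOn
      (fun _ : ℝ => (0:ℝ)) (Set.Ioo a b) volume)
  have hmin := hu.2.2 _ measurable_const h0
  have hconst : eVariationOn (fun _ : ℝ => (0 : EuclideanSpace ℝ (Fin n))) (Set.Ioo a b) = 0 := by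
    apply eVariationOn.constant_on
    rintro x ⟨x', _, rfl⟩ y ⟨y', _, rfl⟩
    rfl
  have hle : eVariationOn u (Set.Ioo a b) ≤ rofEnergy lam a b f u := by
    rw [rofEnergy]; exact le_self_add
  have htop : rofEnergy lam a b f (fun _ => (0 : EuclideanSpace ℝ (Fin n))) ≠ ∞ := by
    rw [rofEnergy, hconst, zero_add]
    exact ENNReal.ofReal_ne_top
  exact ne_top_of_le_ne_top htop (hle.trans hmin)

/-- stability of ROF minimizers: if the data `f_k` converge to `f` in
`L²(I,ℝⁿ)`, then the corresponding minimizers `u_k` converge in `L²(I,ℝⁿ)` to the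
minimizer `u` for datum `f`. -/
theorem rof_minimizers_stable_in_L2
    {n : ℕ} (hn : 1 ≤ n) (a b : ℝ) (hab : a < b) (lam : ℝ) (hlam : 0 < lam)
    (f : ℝ → EuclideanSpace ℝ (Fin n)) (hf_meas : Measurable f)
    (hf_sq : SqIntOn f (Set.Ioo a b))
    (fseq : ℕ → ℝ → EuclideanSpace ℝ (Fin n))
    (hfseq_meas : ∀ k, Measurable (fseq k))
    (hfseq_sq : ∀ k, SqIntOn (fseq k) (Set.Ioo a b))
    (hconv : Filter.Tendsto (fun k => ∫ x in Set.Ioo a b, ‖fseq k x - f x‖ ^ 2)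
      Filter.atTop (nhds 0))
    (useq : ℕ → ℝ → EuclideanSpace ℝ (Fin n))
    (huseq : ∀ k, IsMinimizer lam a b (fseq k) (useq k))
    (u : ℝ → EuclideanSpace ℝ (Fin n)) (hu : IsMinimizer lam a b f u) :
    Filter.Tendsto (fun k => ∫ x in Set.Ioo a b, ‖useq k x - u x‖ ^ 2)
      Filter.atTop (nhds 0) := by
  have hu_meas := hu.1
  have hu_sq := hu.2.1
  have key : ∀ k, (∫ x in Set.Ioo a b, ‖useq k x - u x‖ ^ 2)
      ≤ 4 * ∫ x in Set.Ioo a b, ‖fseq k x - f x‖ ^ 2 := by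
    intro k
    set g := fseq k with hgdef
    set v := useq k with hvdef
    have hv_meas : Measurable v := (huseq k).1
    have hv_sq : SqIntOn v (Set.Ioo a b) := (huseq k).2.1
    have hg_meas : Measurable g := hfseq_meas k
    have hg_sq : SqIntOn g (Set.Ioo a b) := hfseq_sq k
    set m := fun x => (2:ℝ)⁻¹ • (u x + v x) with hmdef
    have hm_meas : Measurable m := (hu_meas.add hv_meas).const_smul ((2:ℝ)⁻¹)
    have hm_sq : SqIntOn m (Set.Ioo a b) := sqIntOn_mid hu_meas hv_meas hu_sq hv_sq
    have iuf := sqIntOn_sub_int hu_meas hf_meas hu_sq hf_sq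
    have ivg := sqIntOn_sub_int hv_meas hg_meas hv_sq hg_sq
    have imf := sqIntOn_sub_int hm_meas hf_meas hm_sq hf_sq
    have img := sqIntOn_sub_int hm_meas hg_meas hm_sq hg_sq
    have iuv := sqIntOn_sub_int hu_meas hv_meas hu_sq hv_sq
    have iff' := sqIntOn_sub_int hf_meas hg_meas hf_sq hg_sq
    have nn_uf : (0:ℝ) ≤ ∫ x in Set.Ioo a b, ‖u x - f x‖ ^ 2 :=
      integral_nonneg fun x => sq_nonneg _
    have nn_vg : (0:ℝ) ≤ ∫ x in Set.Ioo a b, ‖v x - g x‖ ^ 2 :=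
      integral_nonneg fun x => sq_nonneg _
    have nn_mf : (0:ℝ) ≤ ∫ x in Set.Ioo a b, ‖m x - f x‖ ^ 2 :=
      integral_nonneg fun x => sq_nonneg _
    have nn_mg : (0:ℝ) ≤ ∫ x in Set.Ioo a b, ‖m x - g x‖ ^ 2 :=
      integral_nonneg fun x => sq_nonneg _
    have hcpos : (0:ℝ) < 1 / (2 * lam) := by positivity
    -- Claim 1: fidelity comparison from minimality
    have claim1 : (∫ x in Set.Ioo a b, ‖u x - f x‖ ^ 2) + (∫ x in Set.Ioo a b, ‖v x - g x‖ ^ 2)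
        ≤ (∫ x in Set.Ioo a b, ‖m x - f x‖ ^ 2) + (∫ x in Set.Ioo a b, ‖m x - g x‖ ^ 2) := by
      have h1 := hu.2.2 m hm_meas hm_sq
      have h2 := (huseq k).2.2 m hm_meas hm_sq
      have hTm := evar_mid_le u v (Set.Ioo a b)
      have hTu := tv_ne_top hu
      have hTv := tv_ne_top (huseq k)
      rw [rofEnergy, rofEnergy] at h1 h2
      set Tu := eVariationOn u (Set.Ioo a b)
      set Tv := eVariationOn v (Set.Ioo a b)
      set Tm := eVariationOn m (Set.Ioo a b)
      set c := (1 / (2 * lam) : ℝ) with hcdef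
      set Auf := ENNReal.ofReal (c * ∫ x in Set.Ioo a b, ‖u x - f x‖ ^ 2) with hAuf
      set Avg := ENNReal.ofReal (c * ∫ x in Set.Ioo a b, ‖v x - g x‖ ^ 2) with hAvg
      set Amf := ENNReal.ofReal (c * ∫ x in Set.Ioo a b, ‖m x - f x‖ ^ 2) with hAmf
      set Amg := ENNReal.ofReal (c * ∫ x in Set.Ioo a b, ‖m x - g x‖ ^ 2) with hAmg
      have hsum : (Tu + Tv) + (Auf + Avg) ≤ (Tu + Tv) + (Amf + Amg) := by
        calc (Tu + Tv) + (Auf + Avg) = (Tu + Auf) + (Tv + Avg) := by ring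
          _ ≤ (Tm + Amf) + (Tm + Amg) := add_le_add h1 h2
          _ = (Tm + Tm) + (Amf + Amg) := by ring
          _ ≤ (Tu + Tv) + (Amf + Amg) := add_le_add_left hTm _
      have hoff : Auf + Avg ≤ Amf + Amg :=
        (ENNReal.add_le_add_iff_left (ENNReal.add_ne_top.mpr ⟨hTu, hTv⟩)).mp hsum
      rw [hAuf, hAvg, hAmf, hAmg,
        ← ENNReal.ofReal_add (mul_nonneg hcpos.le nn_uf) (mul_nonneg hcpos.le nn_vg),
        ← ENNReal.ofReal_add (mul_nonneg hcpos.le nn_mf) (mul_nonneg hcpos.le nn_mg)] at hoff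
      have hr := (ENNReal.ofReal_le_ofReal_iff
        (add_nonneg (mul_nonneg hcpos.le nn_mf) (mul_nonneg hcpos.le nn_mg))).mp hoff
      have := (mul_le_mul_iff_right₀ hcpos).mp (by linarith : c * ((∫ x in Set.Ioo a b, ‖u x - f x‖ ^ 2) + ∫ x in Set.Ioo a b, ‖v x - g x‖ ^ 2) ≤ c * ((∫ x in Set.Ioo a b, ‖m x - f x‖ ^ 2) + ∫ x in Set.Ioo a b, ‖m x - g x‖ ^ 2))
      linarith
    -- Claim 2: parallelogram estimate
    have claim2 : (∫ x in Set.Ioo a b, ‖m x - f x‖ ^ 2) + (∫ x in Set.Ioo a b, ‖m x - g x‖ ^ 2)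
        ≤ (∫ x in Set.Ioo a b, ‖u x - f x‖ ^ 2) + (∫ x in Set.Ioo a b, ‖v x - g x‖ ^ 2)
          + (∫ x in Set.Ioo a b, ‖f x - g x‖ ^ 2)
          - 4⁻¹ * ∫ x in Set.Ioo a b, ‖u x - v x‖ ^ 2 := by
      have hpt : (fun x => ‖m x - f x‖ ^ 2 + ‖m x - g x‖ ^ 2)
          ≤ fun x => ‖u x - f x‖ ^ 2 + ‖v x - g x‖ ^ 2 + ‖f x - g x‖ ^ 2
            - 4⁻¹ * ‖u x - v x‖ ^ 2 :=
        fun x => key_pointwise (u x) (v x) (f x) (g x)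
      have iA : MeasureTheory.IntegrableOn
          (fun x => ‖u x - f x‖ ^ 2 + ‖v x - g x‖ ^ 2) (Set.Ioo a b) := iuf.add ivg
      have iB : MeasureTheory.IntegrableOn
          (fun x => ‖u x - f x‖ ^ 2 + ‖v x - g x‖ ^ 2 + ‖f x - g x‖ ^ 2) (Set.Ioo a b) :=
        iA.add iff'
      have iC : MeasureTheory.IntegrableOn
          (fun x => 4⁻¹ * ‖u x - v x‖ ^ 2) (Set.Ioo a b) := iuv.const_mul _
      have hInt1 : MeasureTheory.IntegrableOn (fun x => ‖u x - f x‖ ^ 2 + ‖v x - g x‖ ^ 2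
          + ‖f x - g x‖ ^ 2 - 4⁻¹ * ‖u x - v x‖ ^ 2) (Set.Ioo a b) := iB.sub iC
      calc (∫ x in Set.Ioo a b, ‖m x - f x‖ ^ 2) + (∫ x in Set.Ioo a b, ‖m x - g x‖ ^ 2)
          = ∫ x in Set.Ioo a b, (‖m x - f x‖ ^ 2 + ‖m x - g x‖ ^ 2) :=
            (integral_add imf img).symm
        _ ≤ ∫ x in Set.Ioo a b, (‖u x - f x‖ ^ 2 + ‖v x - g x‖ ^ 2 + ‖f x - g x‖ ^ 2
              - 4⁻¹ * ‖u x - v x‖ ^ 2) := integral_mono (imf.add img) hInt1 hpt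
        _ = _ := by
            rw [integral_sub iB iC, integral_add iA iff', integral_add iuf ivg,
              integral_const_mul]
    have hswap1 : (∫ x in Set.Ioo a b, ‖f x - g x‖ ^ 2)
        = ∫ x in Set.Ioo a b, ‖g x - f x‖ ^ 2 := by
      congr 1; funext x; rw [norm_sub_rev]
    have hswap2 : (∫ x in Set.Ioo a b, ‖v x - u x‖ ^ 2)
        = ∫ x in Set.Ioo a b, ‖u x - v x‖ ^ 2 := by
      congr 1; funext x; rw [norm_sub_rev]
    rw [hvdef] at hswap2
    rw [hgdef] at hswap1
    rw [hswap2]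
    rw [hswap1] at claim2
    linarith
  have h0 : ∀ k, (0:ℝ) ≤ ∫ x in Set.Ioo a b, ‖useq k x - u x‖ ^ 2 :=
    fun k => integral_nonneg fun x => sq_nonneg _
  have h4 : Filter.Tendsto (fun k => 4 * ∫ x in Set.Ioo a b, ‖fseq k x - f x‖ ^ 2)
      Filter.atTop (nhds 0) := by
    simpa using hconv.const_mul (4:ℝ)
  exact squeeze_zero h0 key h4
end
end
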